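/- Fix integers k ≥ 3 and n ≥ 1. Suppose f : [k]^n → {0,1} satisfies the following two-coloring property: for every 2k vectors v¹, v², …, v^{2k} ∈ [k]^n (repetitions allowed) such that for every coordinate i ∈ [n] the set of values {v^j_i : j ∈ [2k]} equals all of [k], the set of values {f(v^j) : j ∈ [2k]} equals {0,1}. Then f is 1-fixing: there exist a coordinate ℓ ∈ [n] and values α, β ∈ [k] such that f(x) = 0 for every x ∈ [k]^n with x_ℓ = α, and f(x) = 1 for every x ∈ [k]^n with x_ℓ = β. -/

import Mathlib

namespace TwoColoringPf

/-- The two-coloring hypothesis. -/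
def HF (k n : ℕ) (f : (Fin n → Fin k) → Bool) : Prop :=
  ∀ v : Fin (2 * k) → (Fin n → Fin k),
    (∀ i : Fin n, ∀ c : Fin k, ∃ j : Fin (2 * k), v j i = c) →
    (∃ j, f (v j) = false) ∧ (∃ j, f (v j) = true)

/-- From a list of at most `2k` vectors, all of one color, covering all values in
every coordinate, we get a contradiction with `HF`. -/
lemma listContra {k n : ℕ} (f : (Fin n → Fin k) → Bool) (hf : HF k n f) (b : Bool)
    (L : List (Fin n → Fin k)) (hne : L ≠ []) (hlen : L.length ≤ 2 * k)
    (hcol : ∀ w ∈ L, f w = b) (hcov : ∀ i c, ∃ w ∈ L, w i = c) : False := by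
  obtain ⟨w0, hw0⟩ := List.exists_mem_of_ne_nil L hne
  have hmem : ∀ j : Fin (2 * k),
      (if h : (j : ℕ) < L.length then L[(j : ℕ)] else w0) ∈ L := by
    intro j
    split
    · exact List.getElem_mem _
    · exact hw0
  have hcover : ∀ i c, ∃ j : Fin (2 * k),
      (if h : (j : ℕ) < L.length then L[(j : ℕ)] else w0) i = c := by
    intro i c
    obtain ⟨w, hwL, hwi⟩ := hcov i c
    obtain ⟨idx, hidx, heq⟩ := List.mem_iff_getElem.mp hwL
    refine ⟨⟨idx, lt_of_lt_of_le hidx hlen⟩, ?_⟩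
    show (if h : idx < L.length then L[idx] else w0) i = c
    rw [dif_pos hidx, heq]
    exact hwi
  obtain ⟨⟨j0, h0⟩, ⟨j1, h1⟩⟩ :=
    hf (fun j => if h : (j : ℕ) < L.length then L[(j : ℕ)] else w0) hcover
  have e0 := hcol _ (hmem j0)
  have e1 := hcol _ (hmem j1)
  rw [h0] at e0; rw [h1] at e1
  simp_all

/-- Key reduction: a single monochromatic slab upgrades to 1-fixing. -/
lemma keyReduction {k n : ℕ} (hk : 1 ≤ k) (f : (Fin n → Fin k) → Bool) (hf : HF k n f)
    (h : ∃ (ℓ : Fin n) (α : Fin k) (b : Bool), ∀ x, x ℓ = α → f x = b) :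
    ∃ (ℓ : Fin n) (α β : Fin k),
      (∀ x, x ℓ = α → f x = false) ∧ (∀ x, x ℓ = β → f x = true) := by
  obtain ⟨ℓ, α, b, hb⟩ := h
  by_cases hex : ∃ β : Fin k, ∀ x, x ℓ = β → f x = (!b)
  · obtain ⟨β, hβ⟩ := hex
    cases b
    · exact ⟨ℓ, α, β, hb, by simpa using hβ⟩
    · exact ⟨ℓ, β, α, by simpa using hβ, hb⟩
  · exfalso
    push_neg at hex
    have wit : ∀ c : Fin k, ∃ x, x ℓ = c ∧ f x = b := by
      intro c
      obtain ⟨x, hx1, hx2⟩ := hex c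
      refine ⟨x, hx1, ?_⟩
      cases hfx : f x <;> cases b <;> simp_all
    choose w hw1 hw2 using wit
    apply listContra f hf b
      (((List.finRange k).map fun c => fun i => if i = ℓ then α else c) ++
        (List.finRange k).map w)
    · have : 0 < k := hk
      intro hcontra
      have := congrArg List.length hcontra
      simp at this
      omega
    · simp [Nat.two_mul]
    · intro x hx
      rcases List.mem_append.mp hx with hx | hx
      · obtain ⟨c, _, rfl⟩ := List.mem_map.mp hx
        exact hb _ (by simp)
      · obtain ⟨c, _, rfl⟩ := List.mem_map.mp hx
        exact hw2 c
    · intro i c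
      by_cases hi : i = ℓ
      · refine ⟨w c, List.mem_append.mpr (Or.inr (List.mem_map.mpr ⟨c, List.mem_finRange c, rfl⟩)), ?_⟩
        rw [hi]; exact hw1 c
      · refine ⟨(fun i => if i = ℓ then α else c),
          List.mem_append.mpr (Or.inl (List.mem_map.mpr ⟨c, List.mem_finRange c, rfl⟩)), ?_⟩
        simp [hi]

/-- Case B: merged function is fixed at an original coordinate `mm ∉ {0,1}`;
contradiction with "no monochromatic slab" (encoded by `wit`). -/
lemma caseB {k m : ℕ} (hk : 1 ≤ k) (f : (Fin (m + 2) → Fin k) → Bool)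
    (hf : HF k (m + 2) f)
    (wit : ∀ (ℓ : Fin (m + 2)) (c : Fin k) (b : Bool), ∃ x, x ℓ = c ∧ f x = b)
    (mm : Fin (m + 2)) (hm0 : mm ≠ 0) (hm1 : mm ≠ 1)
    (α : Fin k) (hα : ∀ x, x 0 = x 1 → x mm = α → f x = false) : False := by
  choose w hw1 hw2 using fun c => wit mm c false
  apply listContra f hf false
    (((List.finRange k).map fun c => fun i => if i = mm then α else c) ++
      (List.finRange k).map w)
  · have : 0 < k := hk
    intro hcontra
    have := congrArg List.length hcontra
    simp at this
    omega
  · simp [Nat.two_mul]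
  · intro x hx
    rcases List.mem_append.mp hx with hx | hx
    · obtain ⟨c, _, rfl⟩ := List.mem_map.mp hx
      refine hα _ ?_ (by simp)
      show (if (0 : Fin (m + 2)) = mm then α else c) = (if (1 : Fin (m + 2)) = mm then α else c)
      rw [if_neg (fun h => hm0 h.symm), if_neg (fun h => hm1 h.symm)]
    · obtain ⟨c, _, rfl⟩ := List.mem_map.mp hx
      exact hw2 c
  · intro i c
    by_cases hi : i = mm
    · refine ⟨w c, List.mem_append.mpr (Or.inr (List.mem_map.mpr ⟨c, List.mem_finRange c, rfl⟩)), ?_⟩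
      rw [hi]; exact hw1 c
    · refine ⟨(fun i => if i = mm then α else c),
        List.mem_append.mpr (Or.inl (List.mem_map.mpr ⟨c, List.mem_finRange c, rfl⟩)), ?_⟩
      simp [hi]

/-- Values `c` whose full "diagonal" `x 0 = x 1 = c` is monochromatic of color `b`. -/
def Tset {k m : ℕ} (f : (Fin (m + 2) → Fin k) → Bool) (b : Bool) : Finset (Fin k) :=
  Finset.univ.filter (fun c => ∀ x : Fin (m + 2) → Fin k, x 0 = x 1 → x 0 = c → f x = b)

lemma caseA {k m : ℕ} (hk : 1 ≤ k) (f : (Fin (m + 2) → Fin k) → Bool)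
    (hf : HF k (m + 2) f)
    (wit : ∀ (ℓ : Fin (m + 2)) (c : Fin k) (b : Bool), ∃ x, x ℓ = c ∧ f x = b)
    (α : Fin k) (hα : ∀ x, x 0 = x 1 → x 0 = α → f x = false)
    (hcard : (Tset f true).card ≤ (Tset f false).card) : False := by
  classical
  set T0 := Tset f false with hT0def
  set T1 := Tset f true with hT1def
  have hT0p : ∀ c ∈ T0, ∀ x : Fin (m + 2) → Fin k, x 0 = x 1 → x 0 = c → f x = false :=
    fun c hc => (Finset.mem_filter.mp hc).2
  have hT1p : ∀ c ∈ T1, ∀ x : Fin (m + 2) → Fin k, x 0 = x 1 → x 0 = c → f x = true :=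
    fun c hc => (Finset.mem_filter.mp hc).2
  have hdisj : Disjoint T0 T1 := by
    rw [Finset.disjoint_left]
    intro c h0 h1
    have e0 := hT0p c h0 (fun _ => c) rfl rfl
    have e1 := hT1p c h1 (fun _ => c) rfl rfl
    simp [e0] at e1
  have hMex : ∀ c : Fin k, ∃ x : Fin (m + 2) → Fin k,
      c ∉ T1 → (x 0 = x 1 ∧ x 0 = c ∧ f x = false) := by
    intro c
    by_cases hc : c ∈ T1
    · exact ⟨fun _ => c, fun h => absurd hc h⟩
    · have hc' : ¬ ∀ x : Fin (m + 2) → Fin k, x 0 = x 1 → x 0 = c → f x = true := by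
        intro hall
        exact hc (Finset.mem_filter.mpr ⟨Finset.mem_univ c, hall⟩)
      push_neg at hc'
      obtain ⟨x, h1, h2, h3⟩ := hc'
      exact ⟨x, fun _ => ⟨h1, h2, by simpa using h3⟩⟩
  choose sel hsel using hMex
  choose w1 hw1a hw1b using fun c => wit 0 c false
  choose w2 hw2a hw2b using fun c => wit 1 c false
  set vconst : Fin k → (Fin (m + 2) → Fin k) := fun c => fun _ => c with hvconst
  set vα : Fin k → (Fin (m + 2) → Fin k) := fun c => fun i => if (i : ℕ) ≤ 1 then α else c
    with hvα
  set L : List (Fin (m + 2) → Fin k) :=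
    T0.toList.map vconst ++ (Finset.univ \ T0).toList.map vα ++
      (Finset.univ \ (T0 ∪ T1)).toList.map sel ++ T1.toList.map w1 ++ T1.toList.map w2
    with hL
  -- cardinalities
  have hT0k : T0.card ≤ k := by
    calc T0.card ≤ (Finset.univ : Finset (Fin k)).card := Finset.card_le_univ _
    _ = k := by simp
  have hT01k : T0.card + T1.card ≤ k := by
    rw [← Finset.card_union_of_disjoint hdisj]
    calc (T0 ∪ T1).card ≤ (Finset.univ : Finset (Fin k)).card := Finset.card_le_univ _
    _ = k := by simp
  have l1 : (Finset.univ \ T0).card = k - T0.card := by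
    rw [Finset.card_univ_diff]; simp
  have l2 : (Finset.univ \ (T0 ∪ T1)).card = k - (T0.card + T1.card) := by
    rw [Finset.card_univ_diff, Finset.card_union_of_disjoint hdisj]; simp
  have hlenL : L.length =
      T0.card + (k - T0.card) + (k - (T0.card + T1.card)) + T1.card + T1.card := by
    simp [hL, l1, l2]; omega
  -- membership helpers
  have memA : ∀ c ∈ T0, vconst c ∈ L := by
    intro c hc
    simp only [hL, List.mem_append, List.mem_map, Finset.mem_toList]
    exact Or.inl (Or.inl (Or.inl (Or.inl ⟨c, hc, rfl⟩)))
  have memB : ∀ c ∉ T0, vα c ∈ L := by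
    intro c hc
    simp only [hL, List.mem_append, List.mem_map, Finset.mem_toList]
    exact Or.inl (Or.inl (Or.inl (Or.inr ⟨c, Finset.mem_sdiff.mpr ⟨Finset.mem_univ c, hc⟩, rfl⟩)))
  have memC : ∀ c, c ∉ T0 → c ∉ T1 → sel c ∈ L := by
    intro c hc0 hc1
    simp only [hL, List.mem_append, List.mem_map, Finset.mem_toList]
    refine Or.inl (Or.inl (Or.inr ⟨c, Finset.mem_sdiff.mpr ⟨Finset.mem_univ c, ?_⟩, rfl⟩))
    simp [Finset.mem_union, hc0, hc1]
  have memD : ∀ c ∈ T1, w1 c ∈ L := by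
    intro c hc
    simp only [hL, List.mem_append, List.mem_map, Finset.mem_toList]
    exact Or.inl (Or.inr ⟨c, hc, rfl⟩)
  have memE : ∀ c ∈ T1, w2 c ∈ L := by
    intro c hc
    simp only [hL, List.mem_append, List.mem_map, Finset.mem_toList]
    exact Or.inr ⟨c, hc, rfl⟩
  apply listContra f hf false L
  · apply List.ne_nil_of_length_pos
    rw [hlenL]; omega
  · rw [hlenL]; omega
  · -- colors
    intro x hx
    simp only [hL, List.mem_append, List.mem_map, Finset.mem_toList] at hx
    rcases hx with ((((⟨c, hc, rfl⟩ | ⟨c, hc, rfl⟩) | ⟨c, hc, rfl⟩) | ⟨c, hc, rfl⟩) | ⟨c, hc, rfl⟩)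
    · exact hT0p c hc (vconst c) rfl rfl
    · refine hα (vα c) ?_ ?_
      · show (if ((0 : Fin (m + 2)) : ℕ) ≤ 1 then α else c) =
            (if ((1 : Fin (m + 2)) : ℕ) ≤ 1 then α else c)
        rw [if_pos (by simp), if_pos (by simp [Fin.val_one])]
      · show (if ((0 : Fin (m + 2)) : ℕ) ≤ 1 then α else c) = α
        rw [if_pos (by simp)]
    · have hc1 : c ∉ T1 := by
        have := (Finset.mem_sdiff.mp hc).2
        simp [Finset.mem_union] at this
        exact this.2
      exact (hsel c hc1).2.2
    · exact hw1b c
    · exact hw2b c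
  · -- covering
    intro i c
    by_cases hc0 : c ∈ T0
    · exact ⟨vconst c, memA c hc0, rfl⟩
    · by_cases hi0 : i = 0
      · by_cases hc1 : c ∈ T1
        · exact ⟨w1 c, memD c hc1, by rw [hi0]; exact hw1a c⟩
        · exact ⟨sel c, memC c hc0 hc1, by rw [hi0]; exact (hsel c hc1).2.1⟩
      · by_cases hi1 : i = 1
        · by_cases hc1 : c ∈ T1
          · exact ⟨w2 c, memE c hc1, by rw [hi1]; exact hw2a c⟩
          · refine ⟨sel c, memC c hc0 hc1, ?_⟩
            rw [hi1, ← (hsel c hc1).1]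
            exact (hsel c hc1).2.1
        · refine ⟨vα c, memB c hc0, ?_⟩
          show (if (i : ℕ) ≤ 1 then α else c) = c
          have hv0 : (i : ℕ) ≠ 0 := fun h => hi0 (by apply Fin.ext; simp [h])
          have hv1 : (i : ℕ) ≠ 1 := fun h => hi1 (by apply Fin.ext; simp [h, Fin.val_one])
          rw [if_neg (by omega)]

lemma aux (k : ℕ) (hk : 3 ≤ k) :
    ∀ n, 1 ≤ n → ∀ f : (Fin n → Fin k) → Bool, HF k n f →
    ∃ (ℓ : Fin n) (α β : Fin k),
      (∀ x, x ℓ = α → f x = false) ∧ (∀ x, x ℓ = β → f x = true) := by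
  intro n hn
  induction n, hn using Nat.le_induction with
  | base =>
    intro f hf
    apply keyReduction (by omega) f hf
    refine ⟨0, ⟨0, by omega⟩, f (fun _ => ⟨0, by omega⟩), ?_⟩
    intro x hx
    have hxe : x = fun _ => (⟨0, by omega⟩ : Fin k) := by
      funext i
      rw [Subsingleton.elim i (0 : Fin 1)]
      exact hx
    rw [hxe]
  | succ n hn ih =>
    intro f hf
    obtain ⟨m, rfl⟩ : ∃ m, n = m + 1 := ⟨n - 1, by omega⟩
    by_cases hslab : ∃ (ℓ : Fin (m + 1 + 1)) (α : Fin k) (b : Bool), ∀ x, x ℓ = α → f x = b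
    · exact keyReduction (by omega) f hf hslab
    · exfalso
      push_neg at hslab
      have wit : ∀ (ℓ : Fin (m + 2)) (c : Fin k) (b : Bool), ∃ x, x ℓ = c ∧ f x = b := by
        intro ℓ c b
        obtain ⟨x, h1, h2⟩ := hslab ℓ c (!b)
        refine ⟨x, h1, ?_⟩
        cases hfx : f x <;> cases b <;> simp_all
      -- merged function along coordinates 0 and 1
      set sq : Fin (m + 2) → Fin (m + 1) := fun i =>
        if h : (i : ℕ) = 0 then ⟨0, by omega⟩
        else ⟨(i : ℕ) - 1, by have := i.isLt; omega⟩ with hsq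
      set lift : (Fin (m + 1) → Fin k) → (Fin (m + 2) → Fin k) :=
        fun y i => y (sq i) with hlift
      have hfg : HF k (m + 1) (fun y => f (lift y)) := by
        intro u hu
        exact hf (fun j => lift (u j)) (fun i c => hu (sq i) c)
      obtain ⟨ℓ', α, β, h0, h1⟩ := ih (fun y => f (lift y)) hfg
      set drop : (Fin (m + 2) → Fin k) → (Fin (m + 1) → Fin k) :=
        fun x j => x ⟨(j : ℕ) + 1, by have := j.isLt; omega⟩ with hdrop
      have hld : ∀ x : Fin (m + 2) → Fin k, x 0 = x 1 → lift (drop x) = x := by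
        intro x hx
        funext i
        show x ⟨((sq i : Fin (m + 1)) : ℕ) + 1, by have := (sq i).isLt; omega⟩ = x i
        by_cases hi : (i : ℕ) = 0
        · have e1 : ((sq i : Fin (m + 1)) : ℕ) = 0 := by simp [hsq, hi]
          have e2 : (⟨((sq i : Fin (m + 1)) : ℕ) + 1, by have := (sq i).isLt; omega⟩ :
              Fin (m + 2)) = 1 := by
            apply Fin.ext; simp [e1, Fin.val_one]
          have e3 : i = 0 := by apply Fin.ext; simp [hi]
          rw [e2, e3, ← hx]
        · have e1 : ((sq i : Fin (m + 1)) : ℕ) = (i : ℕ) - 1 := by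
            have hi' : i ≠ 0 := fun h => hi (by simp [h])
            simp [hsq, hi']
          have e2 : (⟨((sq i : Fin (m + 1)) : ℕ) + 1, by have := (sq i).isLt; omega⟩ :
              Fin (m + 2)) = i := by
            apply Fin.ext; simp [e1]; omega
          rw [e2]
      have hdℓ : ∀ x : Fin (m + 2) → Fin k,
          drop x ℓ' = x ⟨(ℓ' : ℕ) + 1, by have := ℓ'.isLt; omega⟩ := fun x => rfl
      by_cases hl : (ℓ' : ℕ) = 0
      · -- Case A
        have hℓ0 : ℓ' = ⟨0, by omega⟩ := by apply Fin.ext; simp [hl]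
        have hdiag : ∀ b : Bool, ∀ γ : Fin k,
            (∀ y : Fin (m + 1) → Fin k, y ℓ' = γ → f (lift y) = b) →
            ∀ x : Fin (m + 2) → Fin k, x 0 = x 1 → x 0 = γ → f x = b := by
          intro b γ hγ x hx hx0
          have hd : drop x ℓ' = γ := by
            rw [hdℓ x, hℓ0]
            show x ⟨0 + 1, _⟩ = γ
            have : (⟨0 + 1, by omega⟩ : Fin (m + 2)) = 1 := by
              apply Fin.ext; simp [Fin.val_one]
            rw [this, ← hx]
            exact hx0
          have := hγ (drop x) hd
          rwa [hld x hx] at this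
        have hα : ∀ x : Fin (m + 2) → Fin k, x 0 = x 1 → x 0 = α → f x = false :=
          hdiag false α h0
        have hβ : ∀ x : Fin (m + 2) → Fin k, x 0 = x 1 → x 0 = β → f x = true :=
          hdiag true β h1
        rcases le_total (Tset f true).card (Tset f false).card with hc | hc
        · exact caseA (by omega) f hf wit α hα hc
        · apply caseA (k := k) (m := m) (by omega) (fun x => !(f x)) ?_ ?_ β ?_ ?_
          · intro v hv
            obtain ⟨⟨j0, e0⟩, ⟨j1, e1⟩⟩ := hf v hv
            exact ⟨⟨j1, by simp [e1]⟩, ⟨j0, by simp [e0]⟩⟩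
          · intro ℓ c b
            obtain ⟨x, e1, e2⟩ := wit ℓ c (!b)
            exact ⟨x, e1, by simp [e2]⟩
          · intro x hx hx0
            simp [hβ x hx hx0]
          · have e1 : Tset (fun x => !(f x)) true = Tset f false := by
              ext c
              simp [Tset, Bool.not_eq_true']
            have e2 : Tset (fun x => !(f x)) false = Tset f true := by
              ext c
              simp [Tset, Bool.not_eq_false']
            rw [e1, e2]
            exact hc
      · -- Case B
        set mm : Fin (m + 2) := ⟨(ℓ' : ℕ) + 1, by have := ℓ'.isLt; omega⟩ with hmm
        have hmono : ∀ x : Fin (m + 2) → Fin k, x 0 = x 1 → x mm = α → f x = false := by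
          intro x hx hxm
          have hd : drop x ℓ' = α := by rw [hdℓ x]; exact hxm
          have := h0 (drop x) hd
          rwa [hld x hx] at this
        apply caseB (by omega) f hf wit mm ?_ ?_ α hmono
        · intro h
          have : (mm : ℕ) = 0 := by rw [h]; rfl
          simp [hmm] at this
        · intro h
          have : (mm : ℕ) = 1 := by rw [h]; exact Fin.val_one _
          simp [hmm] at this
          exact hl (by simp [this])

end TwoColoringPf

/-- Any function `f : [k]^n → {0,1}` satisfying the two-coloring property is 1-fixing. -/
theorem two_coloring_property_implies_one_fixing
    (k n : ℕ) (hk : 3 ≤ k) (hn : 1 ≤ n)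
    (f : (Fin n → Fin k) → Bool)
    (hf : ∀ v : Fin (2 * k) → (Fin n → Fin k),
        (∀ i : Fin n, ∀ c : Fin k, ∃ j : Fin (2 * k), v j i = c) →
        (∃ j, f (v j) = false) ∧ (∃ j, f (v j) = true)) :
    ∃ (ℓ : Fin n) (α β : Fin k),
      (∀ x : Fin n → Fin k, x ℓ = α → f x = false) ∧
      (∀ x : Fin n → Fin k, x ℓ = β → f x = true) := by
  exact TwoColoringPf.aux k hk n hn f hf
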